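/- The reproducing kernel Hilbert space of the exponential kernel k(x,y) = exp((x−b)^⊤(y−b)/σ²) on ℝ^d consists of the power series h(x) = Σ_α a_α (x−b)^α with Σ_α σ^{2|α|} α! |a_α|² < ∞, with inner product ⟨h, g⟩ = Σ_α σ^{2|α|} α! a_α conj(b_α). In particular, ⟨h, k_x⟩ = h(x) for every x ∈ ℝ^d. -/

import Mathlib

open scoped BigOperators ComplexConjugate

/-- The weight `σ^{2|α|} α!` attached to a multi-index `α`. -/
noncomputable def wt (d : ℕ) (σ : ℝ) (α : Fin d → ℕ) : ℝ :=
  σ ^ (2 * ∑ i, α i) * ∏ i, (Nat.factorial (α i) : ℝ)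

/-- The monomial `(x − b)^α`, viewed as a complex number. -/
noncomputable def mono (d : ℕ) (x b : Fin d → ℝ) (α : Fin d → ℕ) : ℂ :=
  ∏ i, ((x i : ℂ) - (b i : ℂ)) ^ (α i)

/-- The coefficient family of the kernel section `k_x` of the exponential kernel:
`κ_x(α) = (x−b)^α / (σ^{2|α|} α!)`. -/
noncomputable def kerCoeff (d : ℕ) (σ : ℝ) (b x : Fin d → ℝ) (α : Fin d → ℕ) : ℂ :=
  mono d x b α / (wt d σ α : ℂ)

lemma pi_prod_aux (d : ℕ) (f : Fin d → ℕ → ℂ)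
    (hf : ∀ i, Summable fun n => ‖f i n‖) :
    Summable (fun α : Fin d → ℕ => ‖∏ i, f i (α i)‖) ∧
    (∑' α : Fin d → ℕ, ∏ i, f i (α i)) = ∏ i, ∑' n, f i n := by
  induction d with
  | zero =>
      constructor
      · exact Summable.of_finite
      · simp [tsum_fintype]
  | succ d ih =>
      obtain ⟨ihs, iht⟩ := ih (fun i => f i.succ) (fun i => hf i.succ)
      set e := (Fin.consEquiv (fun _ : Fin (d+1) => ℕ)).symm with he
      have key : ∀ α : Fin (d+1) → ℕ,
          ∏ i, f i (α i) = f 0 (α 0) * ∏ i : Fin d, f i.succ (α i.succ) :=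
        fun α => Fin.prod_univ_succ _
      have hsum2 : Summable (fun p : ℕ × (Fin d → ℕ) =>
          ‖f 0 p.1 * ∏ i, f i.succ (p.2 i)‖) := by
        have := (hf 0).mul_of_nonneg ihs (fun n => norm_nonneg _)
          (fun β => norm_nonneg _)
        exact this.congr (fun p => (norm_mul _ _).symm)
      constructor
      · have : Summable ((fun p : ℕ × (Fin d → ℕ) =>
            ‖f 0 p.1 * ∏ i, f i.succ (p.2 i)‖) ∘ e) :=
          hsum2.comp_injective e.injective
        exact this.congr (fun α => by simp [he, key α, Fin.tail])
      · have h1 : (∑' α : Fin (d+1) → ℕ, ∏ i, f i (α i))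
            = ∑' p : ℕ × (Fin d → ℕ), f 0 p.1 * ∏ i, f i.succ (p.2 i) := by
          rw [← e.tsum_eq]
          exact tsum_congr fun α => by simp [he, key α, Fin.tail]
        rw [h1, ← tsum_mul_tsum_of_summable_norm (hf 0) ihs, iht,
          Fin.prod_univ_succ]

lemma wt_prod (d : ℕ) (σ : ℝ) (α : Fin d → ℕ) :
    wt d σ α = ∏ i, (σ ^ 2) ^ (α i) * (Nat.factorial (α i) : ℝ) := by
  rw [wt, Finset.prod_mul_distrib]
  congr 1
  rw [Finset.prod_pow_eq_pow_sum, ← pow_mul]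

lemma wt_pos (d : ℕ) {σ : ℝ} (hσ : 0 < σ) (α : Fin d → ℕ) : 0 < wt d σ α := by
  rw [wt_prod]
  exact Finset.prod_pos fun i _ => mul_pos (pow_pos (pow_pos hσ 2) _)
    (by exact_mod_cast (Nat.factorial_pos _))

lemma conj_mono (d : ℕ) (x b : Fin d → ℝ) (α : Fin d → ℕ) :
    conj (mono d x b α) = mono d x b α := by
  rw [mono, map_prod]
  exact Finset.prod_congr rfl fun i _ => by
    rw [map_pow, map_sub, Complex.conj_ofReal, Complex.conj_ofReal]

/-- The RKHS of the exponential kernel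
`k(x,y) = exp((x−b)ᵀ(y−b)/σ²)` on `ℝ^d` consists of the power series
`h(x) = Σ_α a_α (x−b)^α` with `Σ_α σ^{2|α|} α! |a_α|² < ∞`, equipped with the inner
product `⟨h, g⟩ = Σ_α σ^{2|α|} α! a_α conj(b_α)`.  Concretely: the coefficient family
`κ_x` of `k_x` satisfies the membership condition, the pairing `⟨h, k_x⟩` is a convergent
series equal to `h(x) = Σ_α a_α (x−b)^α`, and `⟨k_y, k_x⟩` recovers the kernel
`exp((x−b)ᵀ(y−b)/σ²)`. -/
theorem exponential_kernel_RKHS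
    (d : ℕ) (σ : ℝ) (hσ : 0 < σ) (b : Fin d → ℝ)
    (a : (Fin d → ℕ) → ℂ)
    (ha : Summable fun α : Fin d → ℕ => wt d σ α * ‖a α‖ ^ 2)
    (x y : Fin d → ℝ) :
    (Summable fun α : Fin d → ℕ => wt d σ α * ‖kerCoeff d σ b x α‖ ^ 2) ∧
    (Summable fun α : Fin d → ℕ =>
      (wt d σ α : ℂ) * a α * conj (kerCoeff d σ b x α)) ∧
    ((∑' α : Fin d → ℕ, (wt d σ α : ℂ) * a α * conj (kerCoeff d σ b x α))
      = ∑' α : Fin d → ℕ, a α * mono d x b α) ∧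
    ((∑' α : Fin d → ℕ,
        (wt d σ α : ℂ) * kerCoeff d σ b y α * conj (kerCoeff d σ b x α))
      = Complex.exp (((∑ i, (x i - b i) * (y i - b i)) / σ ^ 2 : ℝ) : ℂ)) := by
  have hwt : ∀ α, 0 < wt d σ α := wt_pos d hσ
  have hwtne : ∀ α : Fin d → ℕ, ((wt d σ α : ℝ) : ℂ) ≠ 0 := fun α => by
    exact_mod_cast Complex.ofReal_ne_zero.mpr (hwt α).ne'
  have hσ2 : (0:ℝ) < σ ^ 2 := pow_pos hσ 2
  -- norm of mono
  have hmono : ∀ α, ‖mono d x b α‖ = ∏ i, |x i - b i| ^ (α i) := by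
    intro α
    rw [mono]
    rw [norm_prod]
    exact Finset.prod_congr rfl fun i _ => by
      rw [norm_pow]
      norm_cast
  -- pointwise identity for part 1
  set f : Fin d → ℕ → ℂ := fun i n => (((x i - b i)^2 / σ^2 : ℝ) : ℂ) ^ n / n.factorial
    with hf_def
  have hfsum : ∀ i, Summable fun n => ‖f i n‖ := by
    intro i
    have := Real.summable_pow_div_factorial ‖(((x i - b i)^2 / σ^2 : ℝ) : ℂ)‖
    exact this.congr fun n => by
      rw [hf_def]
      simp [norm_div, norm_pow]
  have hpt1 : ∀ α, ‖∏ i, f i (α i)‖ = wt d σ α * ‖kerCoeff d σ b x α‖ ^ 2 := by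
    intro α
    have hnorm : ‖kerCoeff d σ b x α‖ = ‖mono d x b α‖ / wt d σ α := by
      rw [kerCoeff, norm_div, Complex.norm_real, Real.norm_eq_abs,
        abs_of_pos (hwt α)]
    rw [hnorm, div_pow, hmono]
    rw [mul_div_assoc']
    rw [eq_div_iff (pow_ne_zero 2 (hwt α).ne')]
    have hL : ‖∏ i, f i (α i)‖ = ∏ i, ((x i - b i)^2 / σ^2) ^ (α i) / (α i).factorial := by
      rw [norm_prod]
      refine Finset.prod_congr rfl fun i _ => ?_
      rw [hf_def]
      rw [norm_div, norm_pow, Complex.norm_real, Real.norm_eq_abs,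
        abs_of_nonneg (by positivity : (0:ℝ) ≤ (x i - b i)^2 / σ^2)]
      norm_num [abs_of_nonneg]
    rw [hL, wt_prod]
    rw [← Finset.prod_pow, ← Finset.prod_pow, ← Finset.prod_mul_distrib,
      ← Finset.prod_mul_distrib]
    refine Finset.prod_congr rfl fun i _ => ?_
    have hfac : (0:ℝ) < (α i).factorial := by exact_mod_cast (α i).factorial_pos
    have habs : (|x i - b i| ^ (α i)) ^ 2 = ((x i - b i)^2) ^ (α i) := by
      rw [← pow_mul, mul_comm, pow_mul, sq_abs]
    rw [habs]
    field_simp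
    rw [← mul_pow, div_mul_cancel₀ _ (pow_ne_zero 2 hσ.ne')]
  have part1 : Summable fun α : Fin d → ℕ => wt d σ α * ‖kerCoeff d σ b x α‖ ^ 2 :=
    ((pi_prod_aux d f hfsum).1).congr hpt1
  -- pointwise identity for the pairing
  have hpair : ∀ α, (wt d σ α : ℂ) * a α * conj (kerCoeff d σ b x α)
      = a α * mono d x b α := by
    intro α
    rw [kerCoeff, map_div₀, conj_mono, Complex.conj_ofReal]
    field_simp [hwtne α]
  -- part 2 : summability of the pairing
  have hbound : ∀ α, ‖a α * mono d x b α‖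
      ≤ (wt d σ α * ‖a α‖ ^ 2 + wt d σ α * ‖kerCoeff d σ b x α‖ ^ 2) / 2 := by
    intro α
    have hker2 : wt d σ α * ‖kerCoeff d σ b x α‖ ^ 2
        = ‖mono d x b α‖ ^ 2 / wt d σ α := by
      rw [kerCoeff, norm_div, Complex.norm_real, Real.norm_eq_abs,
        abs_of_pos (hwt α), div_pow, sq (wt d σ α), mul_div_assoc',
        mul_div_mul_left _ _ (hwt α).ne']
    rw [norm_mul, hker2]
    rw [le_div_iff₀ (by norm_num : (0:ℝ) < 2)]
    nlinarith [sq_nonneg (wt d σ α * ‖a α‖ - ‖mono d x b α‖), hwt α,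
      div_mul_cancel₀ (‖mono d x b α‖ ^ 2) (hwt α).ne',
      norm_nonneg (a α), norm_nonneg (mono d x b α)]
  have part2' : Summable fun α : Fin d → ℕ => a α * mono d x b α := by
    apply Summable.of_norm_bounded (((ha.add part1).div_const 2)) hbound
  have part2 : Summable fun α : Fin d → ℕ =>
      (wt d σ α : ℂ) * a α * conj (kerCoeff d σ b x α) :=
    part2'.congr fun α => (hpair α).symm
  refine ⟨part1, part2, tsum_congr hpair, ?_⟩
  -- part 4
  set g : Fin d → ℕ → ℂ :=
    fun i n => ((((x i - b i) * (y i - b i)) / σ^2 : ℝ) : ℂ) ^ n / n.factorial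
    with hg_def
  have hgsum : ∀ i, Summable fun n => ‖g i n‖ := by
    intro i
    have := Real.summable_pow_div_factorial
      ‖((((x i - b i) * (y i - b i)) / σ^2 : ℝ) : ℂ)‖
    exact this.congr fun n => by rw [hg_def]; simp [norm_div, norm_pow]
  have hpt4 : ∀ α, (wt d σ α : ℂ) * kerCoeff d σ b y α * conj (kerCoeff d σ b x α)
      = ∏ i, g i (α i) := by
    intro α
    rw [kerCoeff, kerCoeff, map_div₀, conj_mono, Complex.conj_ofReal]
    have hL : (wt d σ α : ℂ) * (mono d y b α / wt d σ α) * (mono d x b α / wt d σ α)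
        = mono d y b α * mono d x b α / wt d σ α := by
      field_simp [hwtne α]
    rw [hL, mono, mono]
    have hwc : ((wt d σ α : ℝ) : ℂ) = ∏ i, ((σ:ℂ) ^ 2) ^ (α i) * ((α i).factorial : ℂ) := by
      rw [wt_prod]
      push_cast
      rfl
    rw [hwc, ← Finset.prod_mul_distrib, ← Finset.prod_div_distrib]
    refine Finset.prod_congr rfl fun i _ => ?_
    rw [hg_def]
    push_cast
    rw [div_pow, div_div, ← mul_pow,
      mul_comm ((y i : ℂ) - (b i : ℂ)) ((x i : ℂ) - (b i : ℂ))]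
  rw [tsum_congr hpt4, (pi_prod_aux d g hgsum).2]
  have hexp : ∀ i : Fin d, (∑' n : ℕ, g i n)
      = Complex.exp ((((x i - b i) * (y i - b i)) / σ^2 : ℝ) : ℂ) := by
    intro i
    rw [Complex.exp_eq_exp_ℂ, NormedSpace.exp_eq_tsum_div]
  rw [Finset.prod_congr rfl fun i _ => hexp i, ← Complex.exp_sum]
  congr 1
  push_cast
  rw [Finset.sum_div]
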